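/- Let B be a rectangular band. Then the reduction system on the free semigroup on {ē : e ∈ B} induced by the presentation of IG(B) is locally confluent (hence, being noetherian, confluent), and every element of IG(B) has a unique normal form: every congruence class of words contains exactly one irreducible word. -/

import Mathlib

/-! Common definitions: free idempotent generated semigroups over bands,
generalised Green's relations, and abundancy notions. -/

/-- `(e, f)` is a *basic pair* if `ef ∈ {e,f}` or `fe ∈ {e,f}`. -/
def basicPair {B : Type*} [Mul B] (e f : B) : Prop :=
  e * f = e ∨ e * f = f ∨ f * e = e ∨ f * e = f

/-- The defining congruence of the free idempotent generated semigroup `IG B`: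
the congruence on the free semigroup on `{ē : e ∈ B}` generated by the relations
`ē f̄ = (ef)‾` for basic pairs `(e, f)`. -/
def igCon (B : Type*) [Semigroup B] : Con (FreeSemigroup B) :=
  conGen fun w₁ w₂ => ∃ e f : B, basicPair e f ∧
    w₁ = FreeSemigroup.of e * FreeSemigroup.of f ∧ w₂ = FreeSemigroup.of (e * f)

/-- The free idempotent generated semigroup over a band `B`. -/
abbrev IG (B : Type*) [Semigroup B] := (igCon B).Quotient

/-- The canonical generator `ē` of `IG B`. -/
def igOf {B : Type*} [Semigroup B] (e : B) : IG B :=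
  ((FreeSemigroup.of e : FreeSemigroup B) : (igCon B).Quotient)

/-- `prodSeq x a b = x a * x (a+1) * ⋯ * x b` (it is `x a` when `b ≤ a`). -/
def prodSeq {M : Type*} [Mul M] (x : ℕ → M) (a b : ℕ) : M :=
  (List.range (b - a)).foldl (fun acc i => acc * x (a + i + 1)) (x a)

/-- The word `x̄_a x̄_{a+1} ⋯ x̄_b` in the free semigroup on `{ē : e ∈ B}`. -/
def freeWord {B : Type*} (x : ℕ → B) (a b : ℕ) : FreeSemigroup B :=
  prodSeq (fun i => FreeSemigroup.of (x i)) a b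

/-- The element `x̄_a x̄_{a+1} ⋯ x̄_b` of `IG B`. -/
def igWord {B : Type*} [Semigroup B] (x : ℕ → B) (a b : ℕ) : IG B :=
  ((freeWord x a b : FreeSemigroup B) : (igCon B).Quotient)

/-- Green's relation `𝓡`: `a 𝓡 b` iff `a = b` or `as = b`, `bt = a` for some `s, t`. -/
def GreenR {S : Type*} [Semigroup S] (a b : S) : Prop :=
  a = b ∨ ∃ s t : S, a * s = b ∧ b * t = a

/-- Green's relation `𝓛`: `a 𝓛 b` iff `a = b` or `sa = b`, `tb = a` for some `s, t`. -/
def GreenL {S : Type*} [Semigroup S] (a b : S) : Prop :=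
  a = b ∨ ∃ s t : S, s * a = b ∧ t * b = a

/-- `a 𝓡* b` iff for all `x, y ∈ S¹`, `xa = ya ↔ xb = yb`. -/
def RStar {S : Type*} [Semigroup S] (a b : S) : Prop :=
  ∀ x y : WithOne S,
    x * (a : WithOne S) = y * (a : WithOne S) ↔ x * (b : WithOne S) = y * (b : WithOne S)

/-- `a 𝓛* b` iff for all `x, y ∈ S¹`, `ax = ay ↔ bx = by`. -/
def LStar {S : Type*} [Semigroup S] (a b : S) : Prop :=
  ∀ x y : WithOne S,
    (a : WithOne S) * x = (a : WithOne S) * y ↔ (b : WithOne S) * x = (b : WithOne S) * y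

/-- `a 𝓡̃ b` iff for every idempotent `e`, `ea = a ↔ eb = b`. -/
def RTilde {S : Type*} [Semigroup S] (a b : S) : Prop :=
  ∀ e : S, IsIdempotentElem e → (e * a = a ↔ e * b = b)

/-- `a 𝓛̃ b` iff for every idempotent `e`, `ae = a ↔ be = b`. -/
def LTilde {S : Type*} [Semigroup S] (a b : S) : Prop :=
  ∀ e : S, IsIdempotentElem e → (a * e = a ↔ b * e = b)

/-- A semigroup is *abundant* if every `𝓡*`-class and every `𝓛*`-class
contains an idempotent. -/
def Abundant (S : Type*) [Semigroup S] : Prop :=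
  ∀ a : S, (∃ e : S, IsIdempotentElem e ∧ RStar a e) ∧
    (∃ e : S, IsIdempotentElem e ∧ LStar a e)

/-- A semigroup is *weakly abundant* if every `𝓡̃`-class and every `𝓛̃`-class
contains an idempotent. -/
def WeaklyAbundant (S : Type*) [Semigroup S] : Prop :=
  ∀ a : S, (∃ e : S, IsIdempotentElem e ∧ RTilde a e) ∧
    (∃ e : S, IsIdempotentElem e ∧ LTilde a e)

/-- On a band, `x` and `y` are `𝒟`-equivalent iff `xyx = x` and `yxy = y`. -/
def dEquiv {B : Type*} [Mul B] (x y : B) : Prop :=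
  x * y * x = x ∧ y * x * y = y

/-- On a band, `x` and `y` are `𝒥`-incomparable iff `xyx ≠ x` and `yxy ≠ y`. -/
def jIncomp {B : Type*} [Mul B] (x y : B) : Prop :=
  x * y * x ≠ x ∧ y * x * y ≠ y

/-- One step of the reduction system induced by the presentation of `IG B`:
replace a factor `ē f̄`, with `(e,f)` a basic pair, by `(ef)‾`. -/
def RedStep {B : Type*} [Semigroup B] (w w' : FreeSemigroup B) : Prop :=
  ∃ (p q : List B) (e f : B), basicPair e f ∧
    w.head :: w.tail = p ++ e :: f :: q ∧
    w'.head :: w'.tail = p ++ (e * f) :: q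

/-- A word is in *normal form* (irreducible) if no reduction step applies. -/
def IsNF {B : Type*} [Semigroup B] (w : FreeSemigroup B) : Prop :=
  ∀ w', ¬ RedStep w w'

/-- `x̄₁ ⋯ x̄ₙ` (letters `x 1, …, x n`) is in *almost normal form* witnessed by
block boundaries `idx 0 = 0 < idx 1 < ⋯ < idx r = n`: within each block all
letters are `𝒟`-equivalent, and letters in adjacent blocks are incomparable. -/
def AlmostNF {B : Type*} [Mul B] (x : ℕ → B) (n r : ℕ) (idx : ℕ → ℕ) : Prop :=
  1 ≤ r ∧ idx 0 = 0 ∧ idx r = n ∧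
  (∀ k < r, idx k < idx (k + 1)) ∧
  (∀ k < r, ∀ p q : ℕ, idx k < p → p ≤ idx (k + 1) → idx k < q → q ≤ idx (k + 1) →
    dEquiv (x p) (x q)) ∧
  (∀ k : ℕ, k + 1 < r → ∀ p q : ℕ, idx k < p → p ≤ idx (k + 1) →
    idx (k + 1) < q → q ≤ idx (k + 2) → jIncomp (x p) (x q))

/-- Condition (P) for `IG B`. -/
def CondP (B : Type*) [Semigroup B] : Prop :=
  ∀ (n m r : ℕ) (u v : ℕ → B) (iu iv : ℕ → ℕ),
    AlmostNF u n r iu → AlmostNF v m r iv →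
    igWord u 1 n = igWord v 1 m →
    ((∀ s : ℕ, 1 ≤ s → s ≤ r →
        (u (iu s) * v (iv s) = u (iu s) ∧ v (iv s) * u (iu s) = v (iv s)) →
        igWord u 1 (iu s) = igWord v 1 (iv s)) ∧
      (∀ t : ℕ, t + 1 ≤ r →
        (u (iu t + 1) * v (iv t + 1) = v (iv t + 1) ∧
          v (iv t + 1) * u (iu t + 1) = u (iu t + 1)) →
        igWord u (iu t + 1) n = igWord v (iv t + 1) m))

/-- A normal band is *pliant* if for every `𝒟`-class `D` there is `c ∈ D` with
`u e u = c` for every `e ∈ D` and every `u` strictly `𝒥`-above `D`. -/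
def Pliant (B : Type*) [Mul B] : Prop :=
  ∀ d : B, ∃ c : B, dEquiv c d ∧
    ∀ e u : B, dEquiv e d → (e * u * e = e ∧ u * e * u ≠ u) → u * e * u = c

namespace IGAux

open Relation

variable {B : Type*} [Semigroup B]

def toL (w : FreeSemigroup B) : List B := w.head :: w.tail

lemma toL_mul (u v : FreeSemigroup B) : toL (u * v) = toL u ++ toL v := rfl

lemma toL_inj {u v : FreeSemigroup B} (h : toL u = toL v) : u = v := by
  cases u; cases v
  simp only [toL, List.cons.injEq] at h
  simp [h.1, h.2]

def Red (l l' : List B) : Prop :=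
  ∃ (p q : List B) (e f : B), basicPair e f ∧
    l = p ++ e :: f :: q ∧ l' = p ++ (e * f) :: q

lemma redStep_iff {w w' : FreeSemigroup B} : RedStep w w' ↔ Red (toL w) (toL w') := Iff.rfl

lemma exists_fs {l : List B} (hl : l ≠ []) : ∃ w : FreeSemigroup B, toL w = l := by
  cases l with
  | nil => simp at hl
  | cons h t => exact ⟨⟨h, t⟩, rfl⟩

variable (hidem : ∀ x : B, x * x = x) (hrect : ∀ x y : B, x * y * x = x)

include hrect in
lemma bc {e f : B} (h : basicPair e f) : e * f = e ∨ e * f = f := by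
  rcases h with h | h | h | h
  · exact Or.inl h
  · exact Or.inr h
  · right
    calc e * f = (f * e) * f := by rw [h]
    _ = f := hrect f e
  · left
    calc e * f = e * (f * e) := by rw [h]
    _ = e := by rw [← mul_assoc]; exact hrect e f

include hrect in
lemma crit {e f g : B} (h1 : basicPair e f) (h2 : basicPair f g) (p q : List B) :
    ∃ z, ReflGen (Red (B := B)) (p ++ (e * f) :: g :: q) z ∧
      ReflGen (Red (B := B)) (p ++ e :: (f * g) :: q) z := by
  rcases bc hrect h1 with h1' | h1'
  · rcases bc hrect h2 with h2' | h2'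
    · -- e*f = e, f*g = f
      refine ⟨p ++ ((e * f) * g) :: q, ReflGen.single ⟨p, q, e * f, g, ?_, rfl, rfl⟩,
        ReflGen.single ⟨p, q, e, f * g, ?_, rfl, by rw [mul_assoc]⟩⟩
      · exact Or.inl (by rw [mul_assoc, h2'])
      · exact Or.inl (by rw [h2']; exact h1')
    · -- e*f = e, f*g = g
      refine ⟨p ++ (e * f) :: g :: q, ReflGen.refl, ?_⟩
      have : p ++ e :: (f * g) :: q = p ++ (e * f) :: g :: q := by rw [h1', h2']
      rw [this]
  · -- e*f = f
    refine ⟨p ++ ((e * f) * g) :: q, ReflGen.single ⟨p, q, e * f, g, ?_, rfl, rfl⟩,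
      ReflGen.single ⟨p, q, e, f * g, ?_, rfl, by rw [mul_assoc]⟩⟩
    · rw [h1']; exact h2
    · exact Or.inr (Or.inl (by rw [← mul_assoc, h1']))

include hrect in
lemma aux_diamond {p₁ q₁ p₂ q₂ : List B} {e₁ f₁ e₂ f₂ : B}
    (hb₁ : basicPair e₁ f₁) (hb₂ : basicPair e₂ f₂)
    (hlen : p₁.length ≤ p₂.length)
    (heq : p₁ ++ e₁ :: f₁ :: q₁ = p₂ ++ e₂ :: f₂ :: q₂) :
    ∃ z, ReflGen (Red (B := B)) (p₁ ++ (e₁ * f₁) :: q₁) z ∧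
      ReflGen (Red (B := B)) (p₂ ++ (e₂ * f₂) :: q₂) z := by
  obtain ⟨s, hp₂, hs⟩ :
      ∃ s, p₂ = p₁ ++ s ∧ e₁ :: f₁ :: q₁ = s ++ e₂ :: f₂ :: q₂ := by
    rcases List.append_eq_append_iff.1 heq with ⟨s, hs1, hs2⟩ | ⟨s, hs1, hs2⟩
    · exact ⟨s, hs1, hs2⟩
    · have hlen2 := congrArg List.length hs1
      simp only [List.length_append] at hlen2
      have : s = [] := List.length_eq_zero_iff.1 (by omega)
      subst this
      simp only [List.append_nil] at hs1
      exact ⟨[], by simp [hs1], by simp [hs2]⟩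
  subst hp₂
  match s, hs with
  | [], hs =>
    simp only [List.nil_append, List.cons.injEq] at hs
    obtain ⟨rfl, rfl, rfl⟩ := hs
    refine ⟨p₁ ++ (e₁ * f₁) :: q₁, ReflGen.refl, ?_⟩
    simp only [List.append_nil]
    exact ReflGen.refl
  | [g], hs =>
    simp only [List.singleton_append, List.cons.injEq] at hs
    obtain ⟨rfl, rfl, rfl⟩ := hs
    obtain ⟨z, hz1, hz2⟩ := crit hrect hb₁ hb₂ p₁ q₂
    refine ⟨z, hz1, ?_⟩
    simp only [List.append_assoc, List.singleton_append]
    exact hz2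
  | g :: h :: s', hs =>
    simp only [List.cons_append, List.cons.injEq] at hs
    obtain ⟨rfl, rfl, rfl⟩ := hs
    refine ⟨p₁ ++ (e₁ * f₁) :: (s' ++ (e₂ * f₂) :: q₂),
      ReflGen.single ⟨p₁ ++ (e₁ * f₁) :: s', q₂, e₂, f₂, hb₂, by simp, by simp⟩,
      ReflGen.single ⟨p₁, s' ++ (e₂ * f₂) :: q₂, e₁, f₁, hb₁, by simp, rfl⟩⟩


include hrect in
lemma ldiamond {l x y : List B} (hx : Red l x) (hy : Red l y) :
    ∃ z, ReflGen (Red (B := B)) x z ∧ ReflGen (Red (B := B)) y z := by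
  obtain ⟨p₁, q₁, e₁, f₁, hb₁, hl₁, hx'⟩ := hx
  obtain ⟨p₂, q₂, e₂, f₂, hb₂, hl₂, hy'⟩ := hy
  subst hx' hy' hl₁
  rcases le_total p₁.length p₂.length with hle | hle
  · exact aux_diamond hrect hb₁ hb₂ hle hl₂
  · obtain ⟨z, h1, h2⟩ := aux_diamond hrect hb₂ hb₁ hle hl₂.symm
    exact ⟨z, h2, h1⟩

lemma red_ne_nil {l m : List B} (h : Red l m) : m ≠ [] := by
  obtain ⟨p, q, e, f, _, _, hm⟩ := h
  subst hm
  simp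

lemma lift_rg {x : FreeSemigroup B} {m : List B} (h : ReflGen (Red (B := B)) (toL x) m) :
    ∃ z, toL z = m ∧ ReflGen (RedStep (B := B)) x z := by
  cases h with
  | refl => exact ⟨x, rfl, ReflGen.refl⟩
  | single h =>
    obtain ⟨z, hz⟩ := exists_fs (red_ne_nil h)
    exact ⟨z, hz, ReflGen.single (redStep_iff.2 (by rw [hz]; exact h))⟩

include hrect in
lemma fs_diamond {w x y : FreeSemigroup B} (hx : RedStep w x) (hy : RedStep w y) :
    ∃ z, ReflGen (RedStep (B := B)) x z ∧ ReflGen (RedStep (B := B)) y z := by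
  obtain ⟨m, h1, h2⟩ := ldiamond hrect (redStep_iff.1 hx) (redStep_iff.1 hy)
  obtain ⟨z₁, hz₁, hr₁⟩ := lift_rg h1
  obtain ⟨z₂, hz₂, hr₂⟩ := lift_rg h2
  have : z₂ = z₁ := toL_inj (hz₂.trans hz₁.symm)
  exact ⟨z₁, hr₁, this ▸ hr₂⟩

include hrect in
lemma fs_confluent {w x y : FreeSemigroup B} (hx : ReflTransGen (RedStep (B := B)) w x)
    (hy : ReflTransGen (RedStep (B := B)) w y) :
    ∃ z, ReflTransGen (RedStep (B := B)) x z ∧ ReflTransGen (RedStep (B := B)) y z :=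
  Relation.church_rosser
    (fun _ _ _ h1 h2 => by
      obtain ⟨z, hz1, hz2⟩ := fs_diamond hrect h1 h2
      exact ⟨z, hz1, hz2.to_reflTransGen⟩) hx hy

/-! Evaluation into `WithOne (IG B)`. -/

def ev (l : List B) : WithOne (IG B) := (l.map fun e => (igOf e : WithOne (IG B))).prod

lemma ev_cons (a : B) (l : List B) : ev (a :: l) = (igOf a : WithOne (IG B)) * ev l := by
  simp [ev]

lemma ev_append (a b : List B) : ev (a ++ b) = ev a * ev b := by
  simp [ev]

lemma mk_cons (h x : B) (t : List B) :
    ((⟨h, x :: t⟩ : FreeSemigroup B) : IG B) =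
      igOf h * ((⟨x, t⟩ : FreeSemigroup B) : IG B) := by
  have : (⟨h, x :: t⟩ : FreeSemigroup B) = FreeSemigroup.of h * ⟨x, t⟩ := rfl
  rw [this, igOf, Con.coe_mul]

lemma ev_toL (w : FreeSemigroup B) : ev (toL w) = ((w : IG B) : WithOne (IG B)) := by
  obtain ⟨h, t⟩ := w
  induction t generalizing h with
  | nil =>
    show ev [h] = _
    simp only [ev, List.map_cons, List.map_nil, List.prod_cons, List.prod_nil, mul_one]
    rfl
  | cons x t ih =>
    show ev (h :: x :: t) = _
    have hx := ih x
    rw [show toL (⟨x, t⟩ : FreeSemigroup B) = x :: t from rfl] at hx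
    rw [ev_cons, hx, mk_cons, WithOne.coe_mul]

lemma igOf_mul_basic {e f : B} (hb : basicPair e f) : igOf e * igOf f = igOf (e * f) := by
  show ((FreeSemigroup.of e : FreeSemigroup B) : IG B) * _ = _
  rw [igOf, igOf, ← Con.coe_mul]
  exact (Con.eq _).2 (ConGen.Rel.of _ _ ⟨e, f, hb, rfl, rfl⟩)

lemma igCon_of_step {w w' : FreeSemigroup B} (h : RedStep w w') : igCon B w w' := by
  obtain ⟨p, q, e, f, hb, h1, h2⟩ := h
  rw [← Con.eq]
  have : ((w : IG B) : WithOne (IG B)) = ((w' : IG B) : WithOne (IG B)) := by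
    rw [← ev_toL, ← ev_toL]
    show ev (w.head :: w.tail) = ev (w'.head :: w'.tail)
    rw [h1, h2, ev_append, ev_append, ev_cons, ev_cons, ev_cons,
      ← igOf_mul_basic hb, WithOne.coe_mul, mul_assoc]
  exact WithOne.coe_inj.1 this

lemma igCon_of_rtg {w u : FreeSemigroup B} (h : ReflTransGen (RedStep (B := B)) w u) :
    igCon B w u := by
  induction h with
  | refl => exact (igCon B).refl _
  | tail _ h2 ih => exact (igCon B).trans ih (igCon_of_step h2)

lemma redStep_mul_left (a : FreeSemigroup B) {w w' : FreeSemigroup B} (h : RedStep w w') :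
    RedStep (a * w) (a * w') := by
  obtain ⟨p, q, e, f, hb, h1, h2⟩ := h
  refine ⟨toL a ++ p, q, e, f, hb, ?_, ?_⟩
  · show toL (a * w) = _
    rw [toL_mul, List.append_assoc]
    exact congrArg _ h1
  · show toL (a * w') = _
    rw [toL_mul, List.append_assoc]
    exact congrArg _ h2

lemma redStep_mul_right (b : FreeSemigroup B) {w w' : FreeSemigroup B} (h : RedStep w w') :
    RedStep (w * b) (w' * b) := by
  obtain ⟨p, q, e, f, hb, h1, h2⟩ := h
  refine ⟨p, q ++ toL b, e, f, hb, ?_, ?_⟩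
  · show toL (w * b) = _
    rw [toL_mul, show toL w = p ++ e :: f :: q from h1]
    simp
  · show toL (w' * b) = _
    rw [toL_mul, show toL w' = p ++ (e * f) :: q from h2]
    simp

lemma rtg_mul_left (a : FreeSemigroup B) {w w' : FreeSemigroup B}
    (h : ReflTransGen (RedStep (B := B)) w w') :
    ReflTransGen (RedStep (B := B)) (a * w) (a * w') :=
  ReflTransGen.lift (fun x => a * x) (fun _ _ hh => redStep_mul_left a hh) _ _ h

lemma rtg_mul_right (b : FreeSemigroup B) {w w' : FreeSemigroup B}
    (h : ReflTransGen (RedStep (B := B)) w w') :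
    ReflTransGen (RedStep (B := B)) (w * b) (w' * b) :=
  ReflTransGen.lift (fun x => x * b) (fun _ _ hh => redStep_mul_right b hh) _ _ h

include hrect in
lemma igCon_le_join {u v : FreeSemigroup B} (h : igCon B u v) :
    ∃ z, ReflTransGen (RedStep (B := B)) u z ∧ ReflTransGen (RedStep (B := B)) v z := by
  let J : Con (FreeSemigroup B) :=
    { r := fun u v => ∃ z, ReflTransGen (RedStep (B := B)) u z ∧
        ReflTransGen (RedStep (B := B)) v z
      iseqv := by
        refine ⟨fun x => ⟨x, ReflTransGen.refl, ReflTransGen.refl⟩,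
          fun ⟨z, h1, h2⟩ => ⟨z, h2, h1⟩, ?_⟩
        rintro x y w ⟨z₁, hx, hy⟩ ⟨z₂, hy', hw⟩
        obtain ⟨z, hz1, hz2⟩ := fs_confluent hrect hy hy'
        exact ⟨z, hx.trans hz1, hw.trans hz2⟩
      mul' := by
        rintro a b c d ⟨z₁, ha, hb⟩ ⟨z₂, hc, hd⟩
        exact ⟨z₁ * z₂,
          (rtg_mul_right c ha).trans (rtg_mul_left z₁ hc),
          (rtg_mul_right d hb).trans (rtg_mul_left z₁ hd)⟩ }
  have hle : igCon B ≤ J := by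
    apply Con.conGen_le.2
    rintro x y ⟨e, f, hb, rfl, rfl⟩
    refine ⟨FreeSemigroup.of (e * f), ReflTransGen.single ⟨[], [], e, f, hb, rfl, rfl⟩,
      ReflTransGen.refl⟩
  exact hle h

lemma nf_rtg_eq {u z : FreeSemigroup B} (hnf : IsNF u)
    (h : ReflTransGen (RedStep (B := B)) u z) : u = z := by
  rcases (Relation.reflTransGen_iff_eq (fun w hw => hnf w hw)).1 h with h'
  exact h'.symm

lemma redStep_tail_lt {w w' : FreeSemigroup B} (h : RedStep w w') :
    w'.tail.length < w.tail.length := by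
  obtain ⟨p, q, e, f, _, h1, h2⟩ := h
  have l1 := congrArg List.length h1
  have l2 := congrArg List.length h2
  simp only [List.length_cons, List.length_append] at l1 l2
  omega

lemma exists_nf_aux : ∀ n (w : FreeSemigroup B), w.tail.length ≤ n →
    ∃ u, ReflTransGen (RedStep (B := B)) w u ∧ IsNF u := by
  intro n
  induction n with
  | zero =>
    intro w h
    refine ⟨w, ReflTransGen.refl, ?_⟩
    rintro w' ⟨p, q, e, f, _, h1, _⟩
    have := congrArg List.length h1
    simp only [List.length_cons, List.length_append] at this
    omega
  | succ n ih =>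
    intro w h
    by_cases hw : IsNF w
    · exact ⟨w, ReflTransGen.refl, hw⟩
    · simp only [IsNF, not_forall, not_not] at hw
      obtain ⟨w', hw'⟩ := hw
      obtain ⟨u, h1, h2⟩ := ih w' (by have := redStep_tail_lt hw'; omega)
      exact ⟨u, ReflTransGen.head hw' h1, h2⟩

lemma exists_nf (w : FreeSemigroup B) :
    ∃ u, ReflTransGen (RedStep (B := B)) w u ∧ IsNF u :=
  exists_nf_aux w.tail.length w le_rfl

end IGAux

/-- For a rectangular band `B`, the reduction system induced by
the presentation of `IG B` is locally confluent, confluent, and every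
congruence class of `igCon B` contains exactly one irreducible word. -/
theorem IG_rectangular_band_unique_normal_forms
    {B : Type*} [Semigroup B] (hidem : ∀ x : B, x * x = x)
    (hrect : ∀ x y : B, x * y * x = x) :
    (∀ w x y : FreeSemigroup B, RedStep w x → RedStep w y →
      ∃ z : FreeSemigroup B, Relation.ReflTransGen RedStep x z ∧
        Relation.ReflTransGen RedStep y z) ∧
    (∀ w x y : FreeSemigroup B, Relation.ReflTransGen RedStep w x →
      Relation.ReflTransGen RedStep w y →
      ∃ z : FreeSemigroup B, Relation.ReflTransGen RedStep x z ∧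
        Relation.ReflTransGen RedStep y z) ∧
    (∀ w : FreeSemigroup B, ∃! u : FreeSemigroup B, igCon B w u ∧ IsNF u) := by
  refine ⟨fun w x y hx hy => ?_, fun w x y hx hy => IGAux.fs_confluent hrect hx hy,
    fun w => ?_⟩
  · obtain ⟨z, h1, h2⟩ := IGAux.fs_diamond hrect hx hy
    exact ⟨z, h1.to_reflTransGen, h2.to_reflTransGen⟩
  · obtain ⟨u, hru, hnf⟩ := IGAux.exists_nf w
    refine ⟨u, ⟨IGAux.igCon_of_rtg hru, hnf⟩, ?_⟩
    rintro v ⟨hcv, hnfv⟩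
    have hvu : igCon B v u :=
      (igCon B).trans ((igCon B).symm hcv) (IGAux.igCon_of_rtg hru)
    obtain ⟨z, h1, h2⟩ := IGAux.igCon_le_join hrect hvu
    rw [IGAux.nf_rtg_eq hnfv h1, ← IGAux.nf_rtg_eq hnf h2]
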